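/- Let l ≥ 4 and let R₊ = {e_i − e_j : 1 ≤ i < j ≤ l} ∪ {e_i + e_j : 1 ≤ i < j ≤ l} ⊂ ℝ^l (the positive roots of type D_l). Let H ∈ ℝ^l be nonzero and not proportional to any element of R₊. For α ∈ R₊ with ⟪α,H⟫ ≠ 0 set v_H(α) = α/⟪α,H⟫ − H/‖H‖², and let S_H = {v_H(α) : α ∈ R₊, ⟪α,H⟫ ≠ 0}. Then S_H = −S_H if and only if either (a) there exist a permutation τ of {1,…,l}, signs ε ∈ {1,−1}^l, and c ≠ 0 with H_i = c·ε_i·w_{τ(i)} for all i, where w = e₁ = (1, 0, …, 0); or (b) l = 4 and there exist a permutation τ of {1,2,3,4}, signs ε ∈ {1,−1}⁴, and c ≠ 0 with H_i = c·ε_i·w_{τ(i)} for all i, where w = (1, 1, 1, 1). -/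

import Mathlib

open scoped RealInnerProductSpace

lemma aux_inner (l : ℕ) (H : EuclideanSpace ℝ (Fin l)) (i j : Fin l) (σ : ℝ) :
    ⟪EuclideanSpace.single i (1:ℝ) + σ • EuclideanSpace.single j 1, H⟫ = H i + σ * H j := by
  rw [inner_add_left, real_inner_smul_left]
  simp [EuclideanSpace.inner_single_left]

lemma aux_pair_root (l : ℕ) (Rp : Set (EuclideanSpace ℝ (Fin l)))
    (hRp : Rp = {x | ∃ i j : Fin l, i < j ∧
      (x = EuclideanSpace.single i (1 : ℝ) - EuclideanSpace.single j 1 ∨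
       x = EuclideanSpace.single i (1 : ℝ) + EuclideanSpace.single j 1)})
    (i j : Fin l) (hij : i ≠ j) (σ : ℝ) (hσ : σ = 1 ∨ σ = -1) :
    ∃ α ∈ Rp, ∃ s : ℝ, (s = 1 ∨ s = -1) ∧
      α = s • (EuclideanSpace.single i (1:ℝ) + σ • EuclideanSpace.single j 1) := by
  subst hRp
  rcases lt_or_gt_of_ne hij with h | h <;> rcases hσ with rfl | rfl
  · exact ⟨_, ⟨i, j, h, Or.inr rfl⟩, 1, Or.inl rfl, by module⟩
  · exact ⟨_, ⟨i, j, h, Or.inl rfl⟩, 1, Or.inl rfl, by module⟩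
  · exact ⟨_, ⟨j, i, h, Or.inr rfl⟩, 1, Or.inl rfl, by module⟩
  · exact ⟨_, ⟨j, i, h, Or.inl rfl⟩, -1, Or.inr rfl, by module⟩

lemma aux_workhorse (l : ℕ) (Rp : Set (EuclideanSpace ℝ (Fin l)))
    (hRp : Rp = {x | ∃ i j : Fin l, i < j ∧
      (x = EuclideanSpace.single i (1 : ℝ) - EuclideanSpace.single j 1 ∨
       x = EuclideanSpace.single i (1 : ℝ) + EuclideanSpace.single j 1)})
    (H : EuclideanSpace ℝ (Fin l))
    (S : Set (EuclideanSpace ℝ (Fin l)))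
    (hS : S = {y | ∃ α ∈ Rp, ⟪α, H⟫ ≠ 0 ∧ y = (⟪α, H⟫)⁻¹ • α - (‖H‖ ^ 2)⁻¹ • H})
    (hsym : ∀ y ∈ S, -y ∈ S)
    (i j : Fin l) (hij : i ≠ j) (σ : ℝ) (hσ : σ = 1 ∨ σ = -1)
    (ht : H i + σ * H j ≠ 0) :
    ∃ c d : Fin l, c ≠ d ∧ ∃ η u : ℝ, (η = 1 ∨ η = -1) ∧ u ≠ 0 ∧ u = H c + η * H d ∧
      ∀ k, u⁻¹ * ((if k = c then (1:ℝ) else 0) + η * (if k = d then 1 else 0))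
          = 2 * H k / ‖H‖^2
            - (H i + σ * H j)⁻¹ * ((if k = i then 1 else 0) + σ * (if k = j then 1 else 0)) := by
  obtain ⟨α, hαRp, s, hs, hα⟩ := aux_pair_root l Rp hRp i j hij σ hσ
  have hsne : s ≠ 0 := by rcases hs with rfl | rfl <;> norm_num
  have hαH : ⟪α, H⟫ = s * (H i + σ * H j) := by
    rw [hα, real_inner_smul_left, aux_inner]
  have htne : ⟪α, H⟫ ≠ 0 := by rw [hαH]; exact mul_ne_zero hsne ht
  have hy : (⟪α, H⟫)⁻¹ • α - (‖H‖ ^ 2)⁻¹ • H ∈ S := by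
    rw [hS]; exact ⟨α, hαRp, htne, rfl⟩
  have hny := hsym _ hy
  rw [hS] at hny
  obtain ⟨β, hβRp, huβ, heq⟩ := hny
  rw [hRp] at hβRp
  obtain ⟨c, d, hcd, hform⟩ := hβRp
  -- express β as single c 1 + η • single d 1
  have hβform : ∃ η : ℝ, (η = 1 ∨ η = -1) ∧
      β = EuclideanSpace.single c (1:ℝ) + η • EuclideanSpace.single d 1 := by
    rcases hform with h | h
    · exact ⟨-1, Or.inr rfl, by rw [h]; module⟩
    · exact ⟨1, Or.inl rfl, by rw [h]; module⟩
  obtain ⟨η, hη, hβ⟩ := hβform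
  have huval : ⟪β, H⟫ = H c + η * H d := by rw [hβ, aux_inner]
  refine ⟨c, d, hcd.ne, η, ⟪β, H⟫, hη, huβ, huval, fun k => ?_⟩
  have hk := congrArg (fun v => v k) heq
  have hαk : α k = s * ((if k = i then (1:ℝ) else 0) + σ * (if k = j then 1 else 0)) := by
    rw [hα]; simp [EuclideanSpace.single_apply, mul_add, mul_ite]
  have hβk : β k = (if k = c then (1:ℝ) else 0) + η * (if k = d then 1 else 0) := by
    rw [hβ]; simp [EuclideanSpace.single_apply]
  have hk2 : -((⟪α, H⟫)⁻¹ * α k - (‖H‖ ^ 2)⁻¹ * H k)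
      = (⟪β, H⟫)⁻¹ * β k - (‖H‖ ^ 2)⁻¹ * H k := by
    simpa using hk
  rw [hαk, hβk, hαH] at hk2
  have hs2 : s * s = 1 := by rcases hs with rfl | rfl <;> norm_num
  have h5 : ∀ X : ℝ, (s * (H i + σ * H j))⁻¹ * (s * X) = (H i + σ * H j)⁻¹ * X := by
    intro X
    rw [mul_inv]
    rcases hs with rfl | rfl <;> simp [inv_neg] <;> ring
  rw [h5] at hk2
  linear_combination -hk2

lemma aux_normsq (l : ℕ) (H : EuclideanSpace ℝ (Fin l)) : ‖H‖^2 = ∑ k, H k ^ 2 := by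
  rw [EuclideanSpace.norm_eq, Real.sq_sqrt (by positivity)]
  simp [sq_abs]

lemma aux_normsq2 (l : ℕ) (H : EuclideanSpace ℝ (Fin l)) (p q : Fin l) (hpq : p ≠ q)
    (h0 : ∀ k, k ≠ p → k ≠ q → H k = 0) : ‖H‖^2 = H p^2 + H q^2 := by
  rw [aux_normsq]
  rw [← Finset.sum_subset (Finset.subset_univ ({p, q} : Finset (Fin l)))
    (fun x _ hx => by
      simp only [Finset.mem_insert, Finset.mem_singleton, not_or] at hx
      rw [h0 x hx.1 hx.2]; ring)]
  rw [Finset.sum_insert (by simp [hpq]), Finset.sum_singleton]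

lemma aux_normsq3 (l : ℕ) (H : EuclideanSpace ℝ (Fin l)) (p q r : Fin l)
    (hpq : p ≠ q) (hpr : p ≠ r) (hqr : q ≠ r)
    (h0 : ∀ k, k ≠ p → k ≠ q → k ≠ r → H k = 0) : ‖H‖^2 = H p^2 + H q^2 + H r^2 := by
  rw [aux_normsq]
  rw [← Finset.sum_subset (Finset.subset_univ ({p, q, r} : Finset (Fin l)))
    (fun x _ hx => by
      simp only [Finset.mem_insert, Finset.mem_singleton, not_or] at hx
      rw [h0 x hx.1 hx.2.1 hx.2.2]; ring)]
  rw [Finset.sum_insert (by simp [hpq, hpr]), Finset.sum_insert (by simp [hqr]),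
    Finset.sum_singleton, add_assoc]

lemma aux_normsq4 (l : ℕ) (H : EuclideanSpace ℝ (Fin l)) (p q r s : Fin l)
    (hpq : p ≠ q) (hpr : p ≠ r) (hps : p ≠ s) (hqr : q ≠ r) (hqs : q ≠ s) (hrs : r ≠ s)
    (h0 : ∀ k, k ≠ p → k ≠ q → k ≠ r → k ≠ s → H k = 0) :
    ‖H‖^2 = H p^2 + H q^2 + H r^2 + H s^2 := by
  rw [aux_normsq]
  rw [← Finset.sum_subset (Finset.subset_univ ({p, q, r, s} : Finset (Fin l)))
    (fun x _ hx => by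
      simp only [Finset.mem_insert, Finset.mem_singleton, not_or] at hx
      rw [h0 x hx.1 hx.2.1 hx.2.2.1 hx.2.2.2]; ring)]
  rw [Finset.sum_insert (by simp [hpq, hpr, hps]), Finset.sum_insert (by simp [hqr, hqs]),
    Finset.sum_insert (by simp [hrs]), Finset.sum_singleton]
  ring

lemma aux_pattern (l : ℕ) (Rp : Set (EuclideanSpace ℝ (Fin l)))
    (hRp : Rp = {x | ∃ i j : Fin l, i < j ∧
      (x = EuclideanSpace.single i (1 : ℝ) - EuclideanSpace.single j 1 ∨
       x = EuclideanSpace.single i (1 : ℝ) + EuclideanSpace.single j 1)})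
    (H : EuclideanSpace ℝ (Fin l))
    (S : Set (EuclideanSpace ℝ (Fin l)))
    (hS : S = {y | ∃ α ∈ Rp, ⟪α, H⟫ ≠ 0 ∧ y = (⟪α, H⟫)⁻¹ • α - (‖H‖ ^ 2)⁻¹ • H})
    (hsym : ∀ y ∈ S, -y ∈ S)
    (p q r : Fin l) (hpq : p ≠ q) (hpr : p ≠ r) (hqr : q ≠ r)
    (σ0 κ : ℝ) (hσ0 : σ0 = 1 ∨ σ0 = -1) (hκ : κ = 1 ∨ κ = -1)
    (hQ : H q ≠ 0) (hp : H p = 2*σ0*(H q)) (hr : H r = κ*(H q))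
    (h0 : ∀ k, k ≠ p → k ≠ q → k ≠ r → H k = 0) : False := by
  set Q := H q with hQdef
  have hN6 : ‖H‖^2 = 6*Q^2 := by
    rw [aux_normsq3 l H p q r hpq hpr hqr h0, hp, hr]
    rcases hσ0 with rfl | rfl <;> rcases hκ with rfl | rfl <;> ring
  have h2Q : H q + κ * H r = 2 * Q := by
    rw [hr]; rcases hκ with rfl | rfl <;> ring
  have ht : H q + κ * H r ≠ 0 := by rw [h2Q]; simpa using hQ
  obtain ⟨c, d, hcd, η, u, hη, hu, huval, E⟩ :=
    aux_workhorse l Rp hRp H S hS hsym q r hqr κ hκ ht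
  have hco : ∀ k : Fin l,
      u⁻¹ * ((if k = c then (1:ℝ) else 0) + η * (if k = d then 1 else 0)) ≠ 0 →
      k = c ∨ k = d := by
    intro k h
    by_contra hcon
    push_neg at hcon
    simp [hcon.1, hcon.2] at h
  have hPc : p = c ∨ p = d := by
    apply hco
    rw [E p, hN6, h2Q, hp, if_neg hpq, if_neg hpr]
    have : 2 * (2 * σ0 * Q) / (6 * Q ^ 2) - (2*Q)⁻¹ * (0 + κ * 0) = 2*σ0/(3*Q) := by
      field_simp; ring
    rw [this]
    rcases hσ0 with rfl | rfl <;> simp [hQ]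
  have hQc : q = c ∨ q = d := by
    apply hco
    rw [E q, hN6, h2Q, if_pos rfl, if_neg hqr]
    have : 2 * Q / (6 * Q ^ 2) - (2*Q)⁻¹ * (1 + κ * 0) = -1/(6*Q) := by
      field_simp; ring
    rw [this]
    simp [hQ]
  have hRc : r = c ∨ r = d := by
    apply hco
    rw [E r, hN6, h2Q, hr, if_neg (Ne.symm hqr), if_pos rfl]
    have : 2 * (κ * Q) / (6 * Q ^ 2) - (2*Q)⁻¹ * (0 + κ * 1) = -κ/(6*Q) := by
      field_simp; ring
    rw [this]
    rcases hκ with rfl | rfl <;> simp [hQ]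
  rcases hPc with h1 | h1 <;> rcases hQc with h2 | h2 <;> rcases hRc with h3 | h3 <;>
    first
    | exact hpq (h1.trans h2.symm)
    | exact hpr (h1.trans h3.symm)
    | exact hqr (h2.trans h3.symm)

lemma aux_case1 (σ η A B N t u : ℝ) (hσ : σ = 1 ∨ σ = -1) (hη : η = 1 ∨ η = -1)
    (hA : A ≠ 0) (hB : B ≠ 0) (hu : u ≠ 0) (hN : N = A^2 + B^2)
    (htt : t = A + σ*B) (ht : t ≠ 0)
    (ρa ρb : ℝ) (hms : (ρa = 1 ∧ ρb = η) ∨ (ρa = η ∧ ρb = 1))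
    (e1 : u⁻¹ * ρa = 2*A/N - t⁻¹) (e2 : u⁻¹ * ρb = 2*B/N - σ * t⁻¹) :
    A = σ * B := by
  have hN0 : N ≠ 0 := by rw [hN]; positivity
  have h3 : ρb * (2*A/N - t⁻¹) = ρa * (2*B/N - σ * t⁻¹) := by
    rw [← e1, ← e2]; ring
  have key : ρb * (2*A*t - N) = ρa * (2*B*t - σ*N) := by
    field_simp at h3
    linear_combination h3
  have key3 : 2*A*t - N = η*(2*B*t - σ*N) := by
    rcases hms with ⟨rfl, rfl⟩ | ⟨rfl, rfl⟩
    · rcases hη with rfl | rfl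
      · linear_combination key
      · linear_combination -key
    · linear_combination key
  subst hN htt
  have hAB : A * B ≠ 0 := mul_ne_zero hA hB
  rcases hσ with rfl | rfl <;> rcases hη with rfl | rfl
  · have h4 : (A - B) * (A + B) = 0 := by linear_combination (1/2 : ℝ) * key3
    rcases mul_eq_zero.mp h4 with h5 | h5
    · linarith
    · exact absurd (by linarith : A + 1 * B = 0) ht
  · exact absurd (by linear_combination (1/4 : ℝ) * key3 : A * B = 0) hAB
  · exact absurd (by linear_combination (-1/4 : ℝ) * key3 : A * B = 0) hAB
  · have h4 : (A + B) * (A - B) = 0 := by linear_combination (1/2 : ℝ) * key3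
    rcases mul_eq_zero.mp h4 with h5 | h5
    · linarith
    · exact absurd (by linarith : A + -1 * B = 0) ht

lemma aux_shared (σ ρ₁ ρ₂ A B E N t u : ℝ)
    (hσ : σ = 1 ∨ σ = -1) (hρ₁ : ρ₁ = 1 ∨ ρ₁ = -1) (hρ₂ : ρ₂ = 1 ∨ ρ₂ = -1)
    (hA : A ≠ 0) (hu : u ≠ 0)
    (hN : N = A^2 + B^2 + E^2) (htt : t = A + σ*B) (ht : t ≠ 0)
    (e0 : (0:ℝ) = 2*B/N - σ * t⁻¹)
    (e1 : u⁻¹ * ρ₁ = 2*A/N - t⁻¹)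
    (e2 : u⁻¹ * ρ₂ = 2*E/N) :
    A = 2*σ*B ∧ E = ρ₁*ρ₂*σ*B := by
  have hN0 : N ≠ 0 := by
    rw [hN]; positivity
  have k0 : σ * N = 2*B*t := by
    field_simp at e0
    linear_combination e0
  have h3 : ρ₂*(2*A/N - t⁻¹) = ρ₁*(2*E/N) := by
    rw [← e1, ← e2]; ring
  have k1 : ρ₂*(2*A*t - N) = ρ₁*(2*E*t) := by
    field_simp at h3
    apply mul_right_cancel₀ hN0
    linear_combination N * h3
  have hρ₁2 : ρ₁ * ρ₁ = 1 := by rcases hρ₁ with rfl | rfl <;> norm_num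
  have hρ₂2 : ρ₂ * ρ₂ = 1 := by rcases hρ₂ with rfl | rfl <;> norm_num
  have h2t : (2:ℝ)*t ≠ 0 := by simpa using ht
  rcases hσ with rfl | rfl
  · have k2 : (2*t) * (ρ₂*(A - B) - ρ₁*E) = 0 := by
      linear_combination k1 + ρ₂*k0
    have k3 : ρ₂*(A - B) - ρ₁*E = 0 := by
      rcases mul_eq_zero.mp k2 with h | h
      · exact absurd h h2t
      · exact h
    have hE : E = ρ₁*ρ₂*(A - B) := by
      linear_combination -ρ₁*k3 - E*hρ₁2
    have hE2 : E^2 = (A - B)^2 := by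
      rw [hE]; rcases hρ₁ with rfl | rfl <;> rcases hρ₂ with rfl | rfl <;> ring
    have hA2 : A*(A - 2*B) = 0 := by
      linear_combination (1/2)*k0 + B*htt - (1/2)*hN - (1/2)*hE2
    have hAB : A = 2*B := by
      rcases mul_eq_zero.mp hA2 with h | h
      · exact absurd h hA
      · linarith
    refine ⟨by linarith, ?_⟩
    rw [hE, hAB]; ring
  · have k2 : (2*t) * (ρ₂*(A + B) - ρ₁*E) = 0 := by
      linear_combination k1 - ρ₂*k0
    have k3 : ρ₂*(A + B) - ρ₁*E = 0 := by
      rcases mul_eq_zero.mp k2 with h | h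
      · exact absurd h h2t
      · exact h
    have hE : E = ρ₁*ρ₂*(A + B) := by
      linear_combination -ρ₁*k3 - E*hρ₁2
    have hE2 : E^2 = (A + B)^2 := by
      rw [hE]; rcases hρ₁ with rfl | rfl <;> rcases hρ₂ with rfl | rfl <;> ring
    have hA2 : A*(A + 2*B) = 0 := by
      linear_combination (-1/2)*k0 - B*htt - (1/2)*hN - (1/2)*hE2
    have hAB : A = -(2*B) := by
      rcases mul_eq_zero.mp hA2 with h | h
      · exact absurd h hA
      · linarith
    refine ⟨by linarith, ?_⟩
    rw [hE, hAB]; ring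
lemma aux_coef (l : ℕ) (c d : Fin l) (η u : ℝ) :
    ∀ k : Fin l, u⁻¹ * ((if k = c then (1:ℝ) else 0) + η * (if k = d then 1 else 0)) ≠ 0 →
      k = c ∨ k = d := by
  intro k h
  by_contra hcon
  push_neg at hcon
  simp [hcon.1, hcon.2] at h

lemma aux_sign_mul (η σ : ℝ) (hη : η = 1 ∨ η = -1) (hσ : σ = 1 ∨ σ = -1) :
    η * σ = 1 ∨ η * σ = -1 := by
  rcases hη with rfl | rfl <;> rcases hσ with rfl | rfl <;> norm_num

lemma aux_forward (l : ℕ) (hl : 4 ≤ l)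
    (Rp : Set (EuclideanSpace ℝ (Fin l)))
    (hRp : Rp = {x | ∃ i j : Fin l, i < j ∧
      (x = EuclideanSpace.single i (1 : ℝ) - EuclideanSpace.single j 1 ∨
       x = EuclideanSpace.single i (1 : ℝ) + EuclideanSpace.single j 1)})
    (H : EuclideanSpace ℝ (Fin l)) (hH : H ≠ 0)
    (hprop : ∀ α ∈ Rp, ∀ c : ℝ, H ≠ c • α)
    (S : Set (EuclideanSpace ℝ (Fin l)))
    (hS : S = {y | ∃ α ∈ Rp, ⟪α, H⟫ ≠ 0 ∧ y = (⟪α, H⟫)⁻¹ • α - (‖H‖ ^ 2)⁻¹ • H})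
    (hsym : ∀ y ∈ S, -y ∈ S) :
    ((∃ τ : Equiv.Perm (Fin l), ∃ ε : Fin l → ℝ, (∀ i, ε i = 1 ∨ ε i = -1) ∧
       ∃ c : ℝ, c ≠ 0 ∧ ∀ i, H i = c * ε i * (if (τ i).val = 0 then 1 else 0)) ∨
     (l = 4 ∧ ∃ τ : Equiv.Perm (Fin l), ∃ ε : Fin l → ℝ, (∀ i, ε i = 1 ∨ ε i = -1) ∧
       ∃ c : ℝ, c ≠ 0 ∧ ∀ i, H i = c * ε i * 1)) := by
  have hNpos : (0:ℝ) < ‖H‖^2 := by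
    have := norm_pos_iff.mpr hH
    positivity
  have hNne : ‖H‖^2 ≠ 0 := ne_of_gt hNpos
  have hex : ∃ a : Fin l, H a ≠ 0 := by
    by_contra hcon
    push_neg at hcon
    exact hH (by ext k; exact hcon k)
  obtain ⟨a, hA⟩ := hex
  by_cases hone : ∀ k, k ≠ a → H k = 0
  · -- exactly one nonzero coordinate : case (a)
    left
    have h0l : 0 < l := by omega
    set z : Fin l := ⟨0, h0l⟩
    have key : ∀ i, ((Equiv.swap a z) i).val = 0 ↔ i = a := by
      intro i
      constructor
      · intro hv
        have h1 : Equiv.swap a z i = z := Fin.ext hv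
        exact (Equiv.swap a z).injective (h1.trans (Equiv.swap_apply_left a z).symm)
      · rintro rfl
        simp [Equiv.swap_apply_left, z]
    refine ⟨Equiv.swap a z, fun _ => 1, fun _ => Or.inl rfl, H a, hA, fun i => ?_⟩
    by_cases hia : i = a
    · subst hia
      rw [if_pos ((key i).mpr rfl)]
      ring
    · rw [if_neg (fun hv => hia ((key i).mp hv)), hone i hia]
      ring
  · -- at least two nonzero coordinates
    push_neg at hone
    obtain ⟨b, hba, hB⟩ := hone
    have hab : a ≠ b := fun h => hba h.symm
    have hσex : ∃ σ : ℝ, (σ = 1 ∨ σ = -1) ∧ H a + σ * H b ≠ 0 := by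
      by_cases h1 : H a + H b = 0
      · exact ⟨-1, Or.inr rfl, by intro h2; apply hA; linarith⟩
      · exact ⟨1, Or.inl rfl, by simpa using h1⟩
    obtain ⟨σ, hσ, ht⟩ := hσex
    have hσne : σ ≠ 0 := by rcases hσ with rfl | rfl <;> norm_num
    obtain ⟨c, d, hcd, η, u, hη, hu, huval, E⟩ :=
      aux_workhorse l Rp hRp H S hS hsym a b hab σ hσ ht
    have hηne : η ≠ 0 := by rcases hη with rfl | rfl <;> norm_num
    have hsupp : ∀ k, k ≠ a → k ≠ b → k ≠ c → k ≠ d → H k = 0 := by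
      intro k h1 h2 h3 h4
      have h := E k
      rw [if_neg h3, if_neg h4, if_neg h1, if_neg h2] at h
      have h5 : 2 * H k / ‖H‖^2 = 0 := by linarith
      field_simp at h5
      linarith
    have hinvσ : (σ * (H a + σ * H b))⁻¹ = σ * (H a + σ * H b)⁻¹ := by
      rw [mul_inv]
      rcases hσ with rfl | rfl <;> norm_num
    by_cases hac : a = c
    · subst hac
      by_cases hbd : b = d
      · -- {c,d} = {a,b} : H proportional to a root
        exfalso
        subst hbd
        have e1 : u⁻¹ * 1 = 2 * H a / ‖H‖^2 - (H a + σ * H b)⁻¹ := by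
          have h := E a
          simp only [if_pos rfl, if_true, eq_self_iff_true, if_neg hab, if_neg hcd] at h
          linear_combination h
        have e2 : u⁻¹ * η = 2 * H b / ‖H‖^2 - σ * (H a + σ * H b)⁻¹ := by
          have h := E b
          simp only [if_pos rfl, if_true, eq_self_iff_true, if_neg (Ne.symm hab), if_neg (Ne.symm hab)] at h
          linear_combination h
        have hN2 : ‖H‖^2 = (H a)^2 + (H b)^2 :=
          aux_normsq2 l H a b hab (fun k h1 h2 => hsupp k h1 h2 h1 h2)
        have hAB : H a = σ * H b :=
          aux_case1 σ η (H a) (H b) (‖H‖^2) (H a + σ * H b) u hσ hη hA hB hu hN2 rfl ht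
            1 η (Or.inl ⟨rfl, rfl⟩) e1 e2
        obtain ⟨α, hαRp, s, hs, hα⟩ := aux_pair_root l Rp hRp a b hab σ hσ
        apply hprop α hαRp (σ * H b * s)
        ext k
        have hαk : α k = s * ((if k = a then (1:ℝ) else 0) + σ * (if k = b then 1 else 0)) := by
          rw [hα]; simp [EuclideanSpace.single_apply, mul_add, mul_ite]
        show H k = (σ * H b * s) * α k
        rw [hαk]
        by_cases hka : k = a
        · subst hka
          rw [if_pos rfl, if_neg hab, hAB]
          rcases hs with rfl | rfl <;> rcases hσ with rfl | rfl <;> ring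
        · by_cases hkb : k = b
          · subst hkb
            rw [if_neg hka, if_pos rfl]
            rcases hs with rfl | rfl <;> rcases hσ with rfl | rfl <;> ring
          · rw [if_neg hka, if_neg hkb, hsupp k hka hkb hka hkb]
            ring
      · -- shared index a (as c), outside d
        exfalso
        have e0 : (0:ℝ) = 2 * H b / ‖H‖^2 - σ * (H a + σ * H b)⁻¹ := by
          have h := E b
          simp only [if_pos rfl, if_true, eq_self_iff_true, if_neg (Ne.symm hab), if_neg hbd] at h
          linear_combination h
        have e1 : u⁻¹ * 1 = 2 * H a / ‖H‖^2 - (H a + σ * H b)⁻¹ := by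
          have h := E a
          simp only [if_pos rfl, if_true, eq_self_iff_true, if_neg hab, if_neg hcd] at h
          linear_combination h
        have e2 : u⁻¹ * η = 2 * H d / ‖H‖^2 := by
          have h := E d
          simp only [if_pos rfl, if_true, eq_self_iff_true, if_neg (Ne.symm hcd), if_neg (Ne.symm hbd)] at h
          linear_combination h
        have hN3 : ‖H‖^2 = (H a)^2 + (H b)^2 + (H d)^2 :=
          aux_normsq3 l H a b d hab hcd hbd (fun k h1 h2 h3 => hsupp k h1 h2 h1 h3)
        obtain ⟨hP, hE⟩ :=
          aux_shared σ 1 η (H a) (H b) (H d) (‖H‖^2) (H a + σ * H b) u hσ (Or.inl rfl) hη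
            hA hu hN3 rfl ht e0 e1 e2
        exact aux_pattern l Rp hRp H S hS hsym a b d hab hcd hbd σ (η * σ) hσ
          (aux_sign_mul η σ hη hσ) hB hP (by linear_combination hE)
          (fun k h1 h2 h3 => hsupp k h1 h2 h1 h3)
    · by_cases had : a = d
      · subst had
        by_cases hbc : b = c
        · -- {c,d} = {b,a} : H proportional to a root
          exfalso
          subst hbc
          have e1 : u⁻¹ * η = 2 * H a / ‖H‖^2 - (H a + σ * H b)⁻¹ := by
            have h := E a
            simp only [if_pos rfl, if_true, eq_self_iff_true, if_neg hab, if_neg (fun h' => hac h')] at h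
            linear_combination h
          have e2 : u⁻¹ * 1 = 2 * H b / ‖H‖^2 - σ * (H a + σ * H b)⁻¹ := by
            have h := E b
            simp only [if_pos rfl, if_true, eq_self_iff_true, if_neg (Ne.symm hab)] at h
            linear_combination h
          have hN2 : ‖H‖^2 = (H a)^2 + (H b)^2 :=
            aux_normsq2 l H a b hab (fun k h1 h2 => hsupp k h1 h2 h2 h1)
          have hAB : H a = σ * H b :=
            aux_case1 σ η (H a) (H b) (‖H‖^2) (H a + σ * H b) u hσ hη hA hB hu hN2 rfl ht
              η 1 (Or.inr ⟨rfl, rfl⟩) e1 e2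
          obtain ⟨α, hαRp, s, hs, hα⟩ := aux_pair_root l Rp hRp a b hab σ hσ
          apply hprop α hαRp (σ * H b * s)
          ext k
          have hαk : α k = s * ((if k = a then (1:ℝ) else 0) + σ * (if k = b then 1 else 0)) := by
            rw [hα]; simp [EuclideanSpace.single_apply, mul_add, mul_ite]
          show H k = (σ * H b * s) * α k
          rw [hαk]
          by_cases hka : k = a
          · subst hka
            rw [if_pos rfl, if_neg hab, hAB]
            rcases hs with rfl | rfl <;> rcases hσ with rfl | rfl <;> ring
          · by_cases hkb : k = b
            · subst hkb
              rw [if_neg hka, if_pos rfl]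
              rcases hs with rfl | rfl <;> rcases hσ with rfl | rfl <;> ring
            · rw [if_neg hka, if_neg hkb, hsupp k hka hkb hkb hka]
              ring
        · -- shared index a (as d), outside c
          exfalso
          have hbd2 : b ≠ a := Ne.symm hab
          have e0 : (0:ℝ) = 2 * H b / ‖H‖^2 - σ * (H a + σ * H b)⁻¹ := by
            have h := E b
            simp only [if_pos rfl, if_true, eq_self_iff_true, if_neg (Ne.symm hab), if_neg hbc] at h
            linear_combination h
          have e1 : u⁻¹ * η = 2 * H a / ‖H‖^2 - (H a + σ * H b)⁻¹ := by
            have h := E a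
            simp only [if_pos rfl, if_true, eq_self_iff_true, if_neg hab, if_neg hac] at h
            linear_combination h
          have e2 : u⁻¹ * 1 = 2 * H c / ‖H‖^2 := by
            have h := E c
            simp only [if_pos rfl, if_true, eq_self_iff_true, if_neg hcd, if_neg (fun h' : c = a => hac h'.symm),
              if_neg (fun h' : c = b => hbc h'.symm)] at h
            linear_combination h
          have hN3 : ‖H‖^2 = (H a)^2 + (H b)^2 + (H c)^2 :=
            aux_normsq3 l H a b c hab hac hbc (fun k h1 h2 h3 => hsupp k h1 h2 h3 h1)
          obtain ⟨hP, hE⟩ :=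
            aux_shared σ η 1 (H a) (H b) (H c) (‖H‖^2) (H a + σ * H b) u hσ hη (Or.inl rfl)
              hA hu hN3 rfl ht e0 e1 e2
          exact aux_pattern l Rp hRp H S hS hsym a b c hab hac hbc σ (η * σ) hσ
            (aux_sign_mul η σ hη hσ) hB hP (by linear_combination hE)
            (fun k h1 h2 h3 => hsupp k h1 h2 h3 h1)
      · by_cases hbc : b = c
        · -- shared index b (as c), outside d
          exfalso
          subst hbc
          have hσt : σ * (σ * (H a + σ * H b))⁻¹ = (H a + σ * H b)⁻¹ := by
            rw [hinvσ]
            rcases hσ with rfl | rfl <;> ring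
          have ht2 : σ * (H a + σ * H b) ≠ 0 := mul_ne_zero hσne ht
          have htt2 : σ * (H a + σ * H b) = H b + σ * H a := by
            rcases hσ with rfl | rfl <;> ring
          have e0 : (0:ℝ) = 2 * H a / ‖H‖^2 - σ * (σ * (H a + σ * H b))⁻¹ := by
            rw [hσt]
            have h := E a
            simp only [if_pos rfl, if_true, eq_self_iff_true, if_neg hab, if_neg hac, if_neg had] at h
            linear_combination h
          have e1 : u⁻¹ * 1 = 2 * H b / ‖H‖^2 - (σ * (H a + σ * H b))⁻¹ := by
            rw [hinvσ]
            have h := E b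
            simp only [if_pos rfl, if_true, eq_self_iff_true, if_neg (Ne.symm hab), if_neg hcd] at h
            linear_combination h
          have e2 : u⁻¹ * η = 2 * H d / ‖H‖^2 := by
            have h := E d
            simp only [if_pos rfl, if_true, eq_self_iff_true, if_neg (Ne.symm hcd), if_neg (Ne.symm had)] at h
            linear_combination h
          have hN3 : ‖H‖^2 = (H b)^2 + (H a)^2 + (H d)^2 :=
            aux_normsq3 l H b a d (Ne.symm hab) hcd had
              (fun k h1 h2 h3 => hsupp k h2 h1 h1 h3)
          obtain ⟨hP, hE⟩ :=
            aux_shared σ 1 η (H b) (H a) (H d) (‖H‖^2) (σ * (H a + σ * H b)) u hσ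
              (Or.inl rfl) hη hB hu hN3 htt2 ht2 e0 e1 e2
          exact aux_pattern l Rp hRp H S hS hsym b a d (Ne.symm hab) hcd had σ (η * σ) hσ
            (aux_sign_mul η σ hη hσ) hA hP (by linear_combination hE)
            (fun k h1 h2 h3 => hsupp k h2 h1 h1 h3)
        · by_cases hbd : b = d
          · -- shared index b (as d), outside c
            exfalso
            subst hbd
            have hσt : σ * (σ * (H a + σ * H b))⁻¹ = (H a + σ * H b)⁻¹ := by
              rw [hinvσ]
              rcases hσ with rfl | rfl <;> ring
            have ht2 : σ * (H a + σ * H b) ≠ 0 := mul_ne_zero hσne ht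
            have htt2 : σ * (H a + σ * H b) = H b + σ * H a := by
              rcases hσ with rfl | rfl <;> ring
            have e0 : (0:ℝ) = 2 * H a / ‖H‖^2 - σ * (σ * (H a + σ * H b))⁻¹ := by
              rw [hσt]
              have h := E a
              simp only [if_pos rfl, if_true, eq_self_iff_true, if_neg hab, if_neg hac, if_neg had] at h
              linear_combination h
            have e1 : u⁻¹ * η = 2 * H b / ‖H‖^2 - (σ * (H a + σ * H b))⁻¹ := by
              rw [hinvσ]
              have h := E b
              simp only [if_pos rfl, if_true, eq_self_iff_true, if_neg (Ne.symm hab), if_neg hbc] at h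
              linear_combination h
            have e2 : u⁻¹ * 1 = 2 * H c / ‖H‖^2 := by
              have h := E c
              simp only [if_pos rfl, if_true, eq_self_iff_true, if_neg hcd, if_neg (fun h' : c = a => hac h'.symm),
                if_neg (fun h' : c = b => hbc h'.symm)] at h
              linear_combination h
            have hN3 : ‖H‖^2 = (H b)^2 + (H a)^2 + (H c)^2 :=
              aux_normsq3 l H b a c (Ne.symm hab) hbc hac
                (fun k h1 h2 h3 => hsupp k h2 h1 h3 h1)
            obtain ⟨hP, hE⟩ :=
              aux_shared σ η 1 (H b) (H a) (H c) (‖H‖^2) (σ * (H a + σ * H b)) u hσ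
                hη (Or.inl rfl) hB hu hN3 htt2 ht2 e0 e1 e2
            exact aux_pattern l Rp hRp H S hS hsym b a c (Ne.symm hab) hbc hac σ (η * σ) hσ
              (aux_sign_mul η σ hη hσ) hA hP (by linear_combination hE)
              (fun k h1 h2 h3 => hsupp k h2 h1 h3 h1)
          · -- disjoint case : conclusion (b)
            have e_a : (0:ℝ) = 2 * H a / ‖H‖^2 - (H a + σ * H b)⁻¹ := by
              have h := E a
              simp only [if_pos rfl, if_true, eq_self_iff_true, if_neg hab, if_neg hac, if_neg had] at h
              linear_combination h
            have e_b : (0:ℝ) = 2 * H b / ‖H‖^2 - σ * (H a + σ * H b)⁻¹ := by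
              have h := E b
              simp only [if_pos rfl, if_true, eq_self_iff_true, if_neg (Ne.symm hab), if_neg hbc, if_neg hbd] at h
              linear_combination h
            have e_c : u⁻¹ = 2 * H c / ‖H‖^2 := by
              have h := E c
              simp only [if_pos rfl, if_true, eq_self_iff_true, if_neg hcd, if_neg (fun h' : c = a => hac h'.symm),
                if_neg (fun h' : c = b => hbc h'.symm)] at h
              linear_combination h
            have e_d : u⁻¹ * η = 2 * H d / ‖H‖^2 := by
              have h := E d
              simp only [if_pos rfl, if_true, eq_self_iff_true, if_neg (Ne.symm hcd),
                if_neg (fun h' : d = a => had h'.symm),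
                if_neg (fun h' : d = b => hbd h'.symm)] at h
              linear_combination h
            have htinv : (H a + σ * H b)⁻¹ = 2 * H a / ‖H‖^2 := by linarith
            have hBA : H b = σ * H a := by
              have h1 : σ * (2 * H a / ‖H‖^2) = 2 * H b / ‖H‖^2 := by
                rw [← htinv]; linarith
              field_simp at h1
              rcases hσ with rfl | rfl <;> linarith
            have htval : H a + σ * H b = 2 * H a := by
              rw [hBA]; rcases hσ with rfl | rfl <;> ring
            have hN4A : ‖H‖^2 = 4 * (H a)^2 := by
              have h2 : (H a + σ * H b) * (H a + σ * H b)⁻¹ = 1 := mul_inv_cancel₀ ht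
              rw [htinv, htval] at h2
              field_simp at h2
              linarith
            have hC : H c ≠ 0 := by
              intro h0
              rw [h0] at e_c
              simp at e_c
              exact hu e_c
            have hDC : H d = η * H c := by
              have h1 : η * (2 * H c / ‖H‖^2) = 2 * H d / ‖H‖^2 := by
                rw [← e_c, ← e_d]; ring
              field_simp at h1
              rcases hη with rfl | rfl <;> linarith
            have hD : H d ≠ 0 := by
              rw [hDC]; exact mul_ne_zero hηne hC
            have huC : u = 2 * H c := by
              rw [huval, hDC]; rcases hη with rfl | rfl <;> ring
            have hN4C : ‖H‖^2 = 4 * (H c)^2 := by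
              have h2 : u * u⁻¹ = 1 := mul_inv_cancel₀ hu
              rw [e_c, huC] at h2
              field_simp at h2
              linarith
            have hC2 : (H c)^2 = (H a)^2 := by linarith
            -- l = 4
            have hl4 : l = 4 := by
              by_contra hne
              have hl5 : 4 < l := lt_of_le_of_ne hl (Ne.symm hne)
              have hexe : ∃ e : Fin l, e ≠ a ∧ e ≠ b ∧ e ≠ c ∧ e ≠ d := by
                by_contra hcon
                push_neg at hcon
                have hsub : (Finset.univ : Finset (Fin l)) ⊆ {a, b, c, d} := by
                  intro e _
                  simp only [Finset.mem_insert, Finset.mem_singleton]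
                  by_cases h1 : e = a
                  · exact Or.inl h1
                  by_cases h2 : e = b
                  · exact Or.inr (Or.inl h2)
                  by_cases h3 : e = c
                  · exact Or.inr (Or.inr (Or.inl h3))
                  exact Or.inr (Or.inr (Or.inr (hcon e h1 h2 h3)))
                have hcl := Finset.card_le_card hsub
                have h1 := Finset.card_insert_le a ({b, c, d} : Finset (Fin l))
                have h2 := Finset.card_insert_le b ({c, d} : Finset (Fin l))
                have h3 := Finset.card_insert_le c ({d} : Finset (Fin l))
                have h4 : ({d} : Finset (Fin l)).card = 1 := Finset.card_singleton d
                rw [Finset.card_univ, Fintype.card_fin] at hcl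
                omega
              obtain ⟨e, hea, heb, hec, hed⟩ := hexe
              have hE0 : H e = 0 := hsupp e hea heb hec hed
              have hte : H a + 1 * H e ≠ 0 := by rw [hE0]; simpa using hA
              obtain ⟨c', d', hcd', η', u', hη', hu', huval', E'⟩ :=
                aux_workhorse l Rp hRp H S hS hsym a e (Ne.symm hea) 1 (Or.inl rfl) hte
              have hBc : b = c' ∨ b = d' := by
                apply aux_coef l c' d' η' u' b
                rw [E' b, if_neg (Ne.symm hab), if_neg (Ne.symm heb)]
                have hval : 2 * H b / ‖H‖^2 - (H a + 1 * H e)⁻¹ * ((0:ℝ) + 1 * 0)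
                    = 2 * H b / ‖H‖^2 := by ring
                rw [hval]
                exact div_ne_zero (by simpa using hB) hNne
              have hCc : c = c' ∨ c = d' := by
                apply aux_coef l c' d' η' u' c
                rw [E' c, if_neg (fun h' : c = a => hac h'.symm), if_neg (Ne.symm hec)]
                have hval : 2 * H c / ‖H‖^2 - (H a + 1 * H e)⁻¹ * ((0:ℝ) + 1 * 0)
                    = 2 * H c / ‖H‖^2 := by ring
                rw [hval]
                exact div_ne_zero (by simpa using hC) hNne
              have hDc : d = c' ∨ d = d' := by
                apply aux_coef l c' d' η' u' d
                rw [E' d, if_neg (fun h' : d = a => had h'.symm), if_neg (Ne.symm hed)]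
                have hval : 2 * H d / ‖H‖^2 - (H a + 1 * H e)⁻¹ * ((0:ℝ) + 1 * 0)
                    = 2 * H d / ‖H‖^2 := by ring
                rw [hval]
                exact div_ne_zero (by simpa using hD) hNne
              rcases hBc with h1 | h1 <;> rcases hCc with h2 | h2 <;> rcases hDc with h3 | h3 <;>
                first
                | exact hbc (h1.trans h2.symm)
                | exact hbd (h1.trans h3.symm)
                | exact hcd (h2.trans h3.symm)
            -- build conclusion (b)
            right
            have hcard4 : ({a, b, c, d} : Finset (Fin l)).card = 4 := by
              rw [Finset.card_insert_of_notMem (by simp [hab, hac, had]),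
                Finset.card_insert_of_notMem (by simp [hbc, hbd]),
                Finset.card_insert_of_notMem (by simp [hcd]), Finset.card_singleton]
            have huniv4 : ∀ i : Fin l, i = a ∨ i = b ∨ i = c ∨ i = d := by
              intro i
              have hu4 : ({a, b, c, d} : Finset (Fin l)) = Finset.univ :=
                Finset.eq_univ_of_card _ (by rw [hcard4, Fintype.card_fin, hl4])
              have hi : i ∈ ({a, b, c, d} : Finset (Fin l)) := hu4 ▸ Finset.mem_univ i
              simpa using hi
            refine ⟨hl4, Equiv.refl _, fun i => H i * (H a)⁻¹, fun i => ?_, H a, hA,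
              fun i => ?_⟩
            · show H i * (H a)⁻¹ = 1 ∨ H i * (H a)⁻¹ = -1
              have h4 : (H c - H a) * (H c + H a) = 0 := by linear_combination hC2
              rcases huniv4 i with h | h | h | h
              · rw [h]; left; field_simp
              · rw [h, hBA]
                rcases hσ with rfl | rfl
                · left; field_simp
                · right; field_simp
              · rw [h]
                rcases mul_eq_zero.mp h4 with h5 | h5
                · left; rw [show H c = H a from by linarith]; field_simp
                · right; rw [show H c = -H a from by linarith]; field_simp
              · rw [h, hDC]
                rcases mul_eq_zero.mp h4 with h5 | h5
                · rw [show H c = H a from by linarith]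
                  rcases hη with rfl | rfl
                  · left; field_simp
                  · right; field_simp
                · rw [show H c = -H a from by linarith]
                  rcases hη with rfl | rfl
                  · right; field_simp
                  · left; field_simp
            · show H i = H a * (H i * (H a)⁻¹) * 1
              rw [mul_one, mul_comm (H a), mul_assoc, inv_mul_cancel₀ hA, mul_one]
lemma aux_scalar_a (σ x y N : ℝ) (hσ : σ = 1 ∨ σ = -1) (h0 : x = 0 ∨ y = 0)
    (ht : x + σ*y ≠ 0) (hN : N = x^2 + y^2) :
    (x - σ*y)⁻¹ + (x + σ*y)⁻¹ = 2*N⁻¹*x ∧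
      σ*(x + σ*y)⁻¹ - σ*(x - σ*y)⁻¹ = 2*N⁻¹*y := by
  subst hN
  rcases h0 with rfl | rfl <;> rcases hσ with rfl | rfl <;>
    constructor <;>
    first
      | (have hy : y ≠ 0 := by intro h; exact ht (by rw [h]; ring)
         field_simp
         try ring_nf; try field_simp; try ring)
      | (have hx : x ≠ 0 := by intro h; exact ht (by rw [h]; ring)
         field_simp
         try ring_nf; try field_simp; try ring)

set_option maxHeartbeats 1000000 in
lemma aux_backward (l : ℕ) (hl : 4 ≤ l)
    (Rp : Set (EuclideanSpace ℝ (Fin l)))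
    (hRp : Rp = {x | ∃ i j : Fin l, i < j ∧
      (x = EuclideanSpace.single i (1 : ℝ) - EuclideanSpace.single j 1 ∨
       x = EuclideanSpace.single i (1 : ℝ) + EuclideanSpace.single j 1)})
    (H : EuclideanSpace ℝ (Fin l))
    (S : Set (EuclideanSpace ℝ (Fin l)))
    (hS : S = {y | ∃ α ∈ Rp, ⟪α, H⟫ ≠ 0 ∧ y = (⟪α, H⟫)⁻¹ • α - (‖H‖ ^ 2)⁻¹ • H})
    (hrhs : (∃ τ : Equiv.Perm (Fin l), ∃ ε : Fin l → ℝ, (∀ i, ε i = 1 ∨ ε i = -1) ∧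
       ∃ c : ℝ, c ≠ 0 ∧ ∀ i, H i = c * ε i * (if (τ i).val = 0 then 1 else 0)) ∨
     (l = 4 ∧ ∃ τ : Equiv.Perm (Fin l), ∃ ε : Fin l → ℝ, (∀ i, ε i = 1 ∨ ε i = -1) ∧
       ∃ c : ℝ, c ≠ 0 ∧ ∀ i, H i = c * ε i * 1)) :
    ∀ y ∈ S, -y ∈ S := by
  intro y hy
  rw [hS] at hy ⊢
  obtain ⟨α, hαRp, htne, rfl⟩ := hy
  have hαRp' := hαRp
  rw [hRp] at hαRp'
  obtain ⟨i, j, hij, hform⟩ := hαRp'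
  have hij' : i ≠ j := ne_of_lt hij
  have hform2 : ∃ σ : ℝ, (σ = 1 ∨ σ = -1) ∧
      α = EuclideanSpace.single i (1:ℝ) + σ • EuclideanSpace.single j 1 := by
    rcases hform with h | h
    · exact ⟨-1, Or.inr rfl, by rw [h]; module⟩
    · exact ⟨1, Or.inl rfl, by rw [h]; module⟩
  obtain ⟨σ, hσ, hα⟩ := hform2
  have hσne : σ ≠ 0 := by rcases hσ with rfl | rfl <;> norm_num
  have hαH : ⟪α, H⟫ = H i + σ * H j := by rw [hα, aux_inner]
  have hαk : ∀ k, α k = (if k = i then (1:ℝ) else 0) + σ * (if k = j then 1 else 0) := by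
    intro k; rw [hα]; simp [EuclideanSpace.single_apply]
  rcases hrhs with ⟨τ, ε, hε, c₀, hc₀, hval⟩ | ⟨hl4, τ, ε, hε, c₀, hc₀, hval⟩
  · -- case (a) : support is a single coordinate p
    have h0l : 0 < l := by omega
    set p : Fin l := τ.symm ⟨0, h0l⟩ with hpdef
    have hεne : ∀ k, ε k ≠ 0 := fun k => by rcases hε k with h | h <;> rw [h] <;> norm_num
    have hp0 : ∀ k, k ≠ p → H k = 0 := by
      intro k hk
      rw [hval k, if_neg, mul_zero]
      intro h0
      apply hk
      have h1 : τ k = ⟨0, h0l⟩ := Fin.ext h0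
      rw [hpdef, ← h1, Equiv.symm_apply_apply]
    have hpij : p = i ∨ p = j := by
      by_contra hcon
      push_neg at hcon
      apply htne
      rw [hαH, hp0 i (fun h => hcon.1 h.symm), hp0 j (fun h => hcon.2 h.symm)]
      ring
    have hij0 : H i = 0 ∨ H j = 0 := by
      rcases hpij with h | h
      · right; exact hp0 j (by rw [← h] at hij'; exact Ne.symm hij')
      · left; exact hp0 i (by rw [← h] at hij'; exact hij')
    have hsupp2 : ∀ k, k ≠ i → k ≠ j → H k = 0 := by
      intro k h1 h2
      apply hp0
      rcases hpij with h | h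
      · rw [h]; exact h1
      · rw [h]; exact h2
    have hN2 : ‖H‖^2 = (H i)^2 + (H j)^2 := aux_normsq2 l H i j hij' hsupp2
    have hmσ : -σ = 1 ∨ -σ = -1 := by rcases hσ with rfl | rfl <;> norm_num
    obtain ⟨β, hβRp, s, hs, hβ⟩ := aux_pair_root l Rp hRp i j hij' (-σ) hmσ
    have hsne : s ≠ 0 := by rcases hs with rfl | rfl <;> norm_num
    have hβk : ∀ k, β k = s * ((if k = i then (1:ℝ) else 0) + -σ * (if k = j then 1 else 0)) := by
      intro k; rw [hβ]
      simp only [PiLp.smul_apply, PiLp.add_apply, EuclideanSpace.single_apply, smul_eq_mul]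
    have hβH : ⟪β, H⟫ = s * (H i + -σ * H j) := by rw [hβ, real_inner_smul_left, aux_inner]
    have htt' : H i + -σ * H j ≠ 0 := by
      intro hz
      apply htne
      rw [hαH]
      rcases hij0 with h0 | h0 <;> rw [h0] at hz ⊢ <;> rcases hσ with rfl | rfl <;> linarith
    have hune : ⟪β, H⟫ ≠ 0 := by rw [hβH]; exact mul_ne_zero hsne htt'
    refine ⟨β, hβRp, hune, ?_⟩
    ext k
    have hlhs : (-((⟪α, H⟫)⁻¹ • α - (‖H‖ ^ 2)⁻¹ • H)) k
        = -((⟪α, H⟫)⁻¹ * α k - (‖H‖ ^ 2)⁻¹ * H k) := by simp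
    have hrhs2 : ((⟪β, H⟫)⁻¹ • β - (‖H‖ ^ 2)⁻¹ • H) k
        = (⟪β, H⟫)⁻¹ * β k - (‖H‖ ^ 2)⁻¹ * H k := by simp
    rw [hlhs, hrhs2, hαH, hβH, hαk, hβk]
    have hsinv : ∀ X Y : ℝ, (s * X)⁻¹ * (s * Y) = X⁻¹ * Y := by
      intro X Y
      rw [mul_inv]
      rcases hs with rfl | rfl <;> simp [inv_neg] <;> ring
    rw [hsinv]
    obtain ⟨key1, key2⟩ := aux_scalar_a σ (H i) (H j) (‖H‖^2) hσ hij0 (by rw [← hαH]; exact htne) hN2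
    by_cases hki : k = i
    · subst hki
      rw [if_pos rfl, if_neg hij']
      linear_combination -key1
    · by_cases hkj : k = j
      · subst hkj
        rw [if_neg (Ne.symm hij'), if_pos rfl]
        linear_combination -key2
      · rw [if_neg hki, if_neg hkj, hsupp2 k hki hkj]
        ring
  · -- case (b)
    have hεne : ∀ k, ε k ≠ 0 := fun k => by rcases hε k with h | h <;> rw [h] <;> norm_num
    have hval' : ∀ k, H k = c₀ * ε k := fun k => by rw [hval k]; ring
    have hαH2 : ⟪α, H⟫ = c₀ * (ε i + σ * ε j) := by rw [hαH, hval' i, hval' j]; ring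
    have hsum_ne : ε i + σ * ε j ≠ 0 := by
      intro h
      exact htne (by rw [hαH2, h, mul_zero])
    have hσε : σ * ε j = ε i := by
      have h2 : (ε i - σ * ε j) * (ε i + σ * ε j) = 0 := by
        rcases hε i with hi | hi <;> rcases hε j with hj | hj <;> rcases hσ with rfl | rfl <;>
          rw [hi, hj] <;> ring
      rcases mul_eq_zero.mp h2 with h3 | h3
      · linarith
      · exact absurd h3 hsum_ne
    have ht2 : ⟪α, H⟫ = 2 * c₀ * ε i := by rw [hαH2, ← hσε]; ring
    have hcard2 : (Finset.univ \ {i, j} : Finset (Fin l)).card = 2 := by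
      rw [Finset.card_sdiff_of_subset (Finset.subset_univ _), Finset.card_univ, Fintype.card_fin,
        Finset.card_insert_of_notMem (by simp [hij']), Finset.card_singleton]
      omega
    obtain ⟨p, q, hpq, hset⟩ := Finset.card_eq_two.mp hcard2
    have hpmem : p ∈ (Finset.univ \ {i, j} : Finset (Fin l)) := by rw [hset]; simp
    have hqmem : q ∈ (Finset.univ \ {i, j} : Finset (Fin l)) := by rw [hset]; simp
    simp only [Finset.mem_sdiff, Finset.mem_univ, Finset.mem_insert, Finset.mem_singleton,
      true_and, not_or] at hpmem hqmem
    have hcov : ∀ k : Fin l, k ≠ i → k ≠ j → k = p ∨ k = q := by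
      intro k h1 h2
      have hk : k ∈ (Finset.univ \ {i, j} : Finset (Fin l)) := by simp [h1, h2]
      rw [hset] at hk
      simpa using hk
    have hηpq : ε p * ε q = 1 ∨ ε p * ε q = -1 := aux_sign_mul _ _ (hε p) (hε q)
    obtain ⟨β, hβRp, s, hs, hβ⟩ := aux_pair_root l Rp hRp p q hpq (ε p * ε q) hηpq
    have hsne : s ≠ 0 := by rcases hs with rfl | rfl <;> norm_num
    have hβk : ∀ k, β k
        = s * ((if k = p then (1:ℝ) else 0) + (ε p * ε q) * (if k = q then 1 else 0)) := by
      intro k; rw [hβ]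
      simp only [PiLp.smul_apply, PiLp.add_apply, EuclideanSpace.single_apply, smul_eq_mul]
    have hβH : ⟪β, H⟫ = s * (2 * c₀ * ε p) := by
      rw [hβ, real_inner_smul_left, aux_inner, hval' p, hval' q]
      rcases hε q with h | h <;> rw [h] <;> ring
    have hune : ⟪β, H⟫ ≠ 0 :=
      hβH ▸ mul_ne_zero hsne (mul_ne_zero (mul_ne_zero two_ne_zero hc₀) (hεne p))
    have hsq : ∀ k, (H k)^2 = c₀^2 := fun k => by
      rw [hval' k]; rcases hε k with h | h <;> rw [h] <;> ring
    have hN4 : ‖H‖^2 = 4 * c₀^2 := by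
      rw [aux_normsq4 l H i j p q hij' (Ne.symm hpmem.1) (Ne.symm hqmem.1) (Ne.symm hpmem.2)
          (Ne.symm hqmem.2) hpq
          (fun k h1 h2 h3 h4 => absurd (hcov k h1 h2) (by simp [h3, h4])),
        hsq, hsq, hsq, hsq]
      ring
    refine ⟨β, hβRp, hune, ?_⟩
    ext k
    have hlhs : (-((⟪α, H⟫)⁻¹ • α - (‖H‖ ^ 2)⁻¹ • H)) k
        = -((⟪α, H⟫)⁻¹ * α k - (‖H‖ ^ 2)⁻¹ * H k) := by simp
    have hrhs2 : ((⟪β, H⟫)⁻¹ • β - (‖H‖ ^ 2)⁻¹ • H) k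
        = (⟪β, H⟫)⁻¹ * β k - (‖H‖ ^ 2)⁻¹ * H k := by simp
    rw [hlhs, hrhs2, ht2, hβH, hαk, hβk, hN4, hval' k]
    have hsinv : ∀ X Y : ℝ, (s * X)⁻¹ * (s * Y) = X⁻¹ * Y := by
      intro X Y
      rw [mul_inv]
      rcases hs with rfl | rfl <;> simp [inv_neg] <;> ring
    rw [hsinv]
    by_cases hki : k = i
    · subst hki
      rw [if_pos rfl, if_neg hij', if_neg (fun h : k = p => hpmem.1 h.symm),
        if_neg (fun h : k = q => hqmem.1 h.symm)]
      rcases hε k with h | h <;> rw [h] <;> ring_nf <;> field_simp <;> ring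
    · by_cases hkj : k = j
      · subst hkj
        rw [if_neg (Ne.symm hij'), if_pos rfl, if_neg (fun h : k = p => hpmem.2 h.symm),
          if_neg (fun h : k = q => hqmem.2 h.symm), ← hσε]
        rcases hε k with h | h <;> rcases hσ with rfl | rfl <;> rw [h] <;> ring_nf <;> field_simp <;> ring
      · rcases hcov k hki hkj with rfl | rfl
        · rw [if_neg hki, if_neg hkj, if_pos rfl, if_neg hpq]
          rcases hε k with h | h <;> rw [h] <;> ring_nf <;> field_simp <;> ring
        · rw [if_neg hki, if_neg hkj, if_neg (Ne.symm hpq), if_pos rfl]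
          rcases hε k with h | h <;> rcases hε p with h2 | h2 <;> rw [h, h2] <;>
            ring_nf <;> field_simp <;> ring

/-- Classification of austere orbits for restricted root system of type `D_l`
(`l ≥ 4`): for nonzero `H` not proportional to any root, the set
`S_H = {α/⟪α,H⟫ - H/‖H‖²}` is invariant under negation iff `H` is a signed
permutation image of a multiple of `e₁`, or `l = 4` and `H` is a signed
permutation image of a multiple of `(1,1,1,1)`. -/
theorem stmt_11 (l : ℕ) (hl : 4 ≤ l)
    (Rp : Set (EuclideanSpace ℝ (Fin l)))
    (hRp : Rp = {x | ∃ i j : Fin l, i < j ∧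
      (x = EuclideanSpace.single i (1 : ℝ) - EuclideanSpace.single j 1 ∨
       x = EuclideanSpace.single i (1 : ℝ) + EuclideanSpace.single j 1)})
    (H : EuclideanSpace ℝ (Fin l)) (hH : H ≠ 0)
    (hprop : ∀ α ∈ Rp, ∀ c : ℝ, H ≠ c • α)
    (S : Set (EuclideanSpace ℝ (Fin l)))
    (hS : S = {y | ∃ α ∈ Rp, ⟪α, H⟫ ≠ 0 ∧ y = (⟪α, H⟫)⁻¹ • α - (‖H‖ ^ 2)⁻¹ • H}) :
    (fun y => -y) '' S = S ↔
      ((∃ τ : Equiv.Perm (Fin l), ∃ ε : Fin l → ℝ, (∀ i, ε i = 1 ∨ ε i = -1) ∧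
         ∃ c : ℝ, c ≠ 0 ∧ ∀ i, H i = c * ε i * (if (τ i).val = 0 then 1 else 0)) ∨
       (l = 4 ∧ ∃ τ : Equiv.Perm (Fin l), ∃ ε : Fin l → ℝ, (∀ i, ε i = 1 ∨ ε i = -1) ∧
         ∃ c : ℝ, c ≠ 0 ∧ ∀ i, H i = c * ε i * 1)) := by
  constructor
  · intro hsymImg
    have hsym : ∀ y ∈ S, -y ∈ S := by
      intro y hy
      rw [← hsymImg] at hy
      obtain ⟨x, hx, hxy⟩ := hy
      simp only at hxy
      rw [← hxy, neg_neg]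
      exact hx
    exact aux_forward l hl Rp hRp H hH hprop S hS hsym
  · intro hrhs
    have hsym := aux_backward l hl Rp hRp H S hS hrhs
    ext y
    constructor
    · rintro ⟨x, hx, rfl⟩
      exact hsym x hx
    · intro hy
      exact ⟨-y, hsym y hy, neg_neg y⟩
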